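/- Let u(t) = (β/t)x'(t) + x(t) and v(t) = (√((βγ+λ)/t² - βλ/t⁴) + β/t)·x'(t) + x(t) for a C² curve x : [t₁,∞) → ℝⁿ satisfying (λ/t²)x''(t) + (γ/t)x'(t) + ∇g(x(t)) = 0, where ∇g is L-Lipschitz. Then for H(u,v) = g(u) + (1/2)‖u-v‖², one has ‖∇H(u(t),v(t))‖ ≤ (λ/t²)‖x''(t)‖ + (Lβ/t + γ/t + 2√((βγ+λ)/t² - βλ/t⁴))·‖x'(t)‖ for all t ≥ t₁ at which (βγ+λ)/t² - βλ/t⁴ ≥ 0. -/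

import Mathlib

open scoped RealInnerProductSpace

theorem grad_key {n : ℕ} (g : EuclideanSpace ℝ (Fin n) → ℝ) (hg : Differentiable ℝ g)
    (H : WithLp 2 (EuclideanSpace ℝ (Fin n) × EuclideanSpace ℝ (Fin n)) → ℝ)
    (hH : ∀ p, H p = g ((WithLp.equiv 2 _ p).1) +
      (1 / 2) * ‖(WithLp.equiv 2 _ p).1 - (WithLp.equiv 2 _ p).2‖ ^ 2)
    (a b : EuclideanSpace ℝ (Fin n)) :
    HasGradientAt H ((WithLp.equiv 2 _).symm (gradient g a + (a - b), b - a))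
      ((WithLp.equiv 2 _).symm (a, b)) := by
  classical
  let E := EuclideanSpace ℝ (Fin n)
  let φ : WithLp 2 (E × E) ≃L[ℝ] E × E := WithLp.prodContinuousLinearEquiv 2 ℝ E E
  let F1 : WithLp 2 (E × E) →L[ℝ] E :=
    (ContinuousLinearMap.fst ℝ E E).comp φ.toContinuousLinearMap
  let F2 : WithLp 2 (E × E) →L[ℝ] E :=
    (ContinuousLinearMap.snd ℝ E E).comp φ.toContinuousLinearMap
  let ψ : WithLp 2 (E × E) →L[ℝ] E := F1 - F2
  let q : WithLp 2 (E × E) := (WithLp.equiv 2 (E × E)).symm (a, b)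
  have hψq : ψ q = a - b := rfl
  have h1 : HasFDerivAt (fun p => g (F1 p))
      (((InnerProductSpace.toDual ℝ E (gradient g a)) : E →L[ℝ] ℝ).comp F1) q :=
    ((hg a).hasGradientAt.hasFDerivAt.comp q F1.hasFDerivAt)
  have h2 : HasFDerivAt (fun p => (⟪ψ p, ψ p⟫ : ℝ))
      ((fderivInnerCLM ℝ (ψ q, ψ q)).comp (ψ.prod ψ)) q :=
    HasFDerivAt.inner ℝ ψ.hasFDerivAt ψ.hasFDerivAt
  have hHdef : H = fun p => g (F1 p) + (1/2) * ⟪ψ p, ψ p⟫ := by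
    funext p
    rw [hH p, real_inner_self_eq_norm_sq]
    rfl
  have hD : HasFDerivAt H
      ((((InnerProductSpace.toDual ℝ E (gradient g a)) : E →L[ℝ] ℝ).comp F1)
        + (1/2 : ℝ) • ((fderivInnerCLM ℝ (ψ q, ψ q)).comp (ψ.prod ψ))) q := by
    rw [hHdef]
    exact h1.add (h2.const_mul (1/2))
  rw [hasGradientAt_iff_hasFDerivAt]
  refine hD.congr_fderiv ?_
  symm
  apply ContinuousLinearMap.ext
  intro w
  simp only [ContinuousLinearMap.add_apply, ContinuousLinearMap.comp_apply,
    ContinuousLinearMap.smul_apply, ContinuousLinearMap.prod_apply,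
    fderivInnerCLM_apply, InnerProductSpace.toDual_apply_apply, smul_eq_mul]
  have hw1 : F1 w = w.fst := rfl
  have hψw : ψ w = w.fst - w.snd := rfl
  rw [WithLp.prod_inner_apply]
  rw [WithLp.ofLp_fst, WithLp.ofLp_snd, WithLp.ofLp_fst, WithLp.ofLp_snd]
  have e1 : (((WithLp.equiv 2 (E × E)).symm (gradient g a + (a - b), b - a)).fst) =
      gradient g a + (a - b) := rfl
  have e2 : (((WithLp.equiv 2 (E × E)).symm (gradient g a + (a - b), b - a)).snd) =
      b - a := rfl
  rw [e1, e2, hψq, hψw, hw1]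
  rw [real_inner_comm (a - b) (w.fst - w.snd)]
  rw [inner_add_left, inner_sub_left, inner_sub_left, inner_sub_right]
  ring_nf
  rw [inner_sub_left, inner_sub_left]
  ring

/-- Gradient bound for the regularization `H(u,v) = g(u) + ½‖u-v‖²` along the auxiliary
curves `u(t) = (β/t)x'(t) + x(t)` and
`v(t) = (√((βγ+λ)/t² - βλ/t⁴) + β/t)x'(t) + x(t)`:
`‖∇H(u(t),v(t))‖ ≤ (λ/t²)‖x''(t)‖ + (Lβ/t + γ/t + 2√((βγ+λ)/t² - βλ/t⁴))‖x'(t)‖`. -/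
theorem stmt_19 {n : ℕ} (g : EuclideanSpace ℝ (Fin n) → ℝ) (L lam γ β t₁ : ℝ)
    (x x' x'' : ℝ → EuclideanSpace ℝ (Fin n))
    (hg : Differentiable ℝ g)
    (hL : ∀ u u', ‖gradient g u - gradient g u'‖ ≤ L * ‖u - u'‖)
    (hlam : 0 < lam) (hγ : 0 < γ) (hβ : 0 < β) (ht₁ : 0 < t₁)
    (hx' : ∀ t, HasDerivAt x (x' t) t)
    (hx'' : ∀ t, HasDerivAt x' (x'' t) t)
    (hode : ∀ t ≥ t₁, (lam / t ^ 2) • x'' t + (γ / t) • x' t + gradient g (x t) = 0)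
    (H : WithLp 2 (EuclideanSpace ℝ (Fin n) × EuclideanSpace ℝ (Fin n)) → ℝ)
    (hH : ∀ p, H p = g ((WithLp.equiv 2 _ p).1) +
      (1 / 2) * ‖(WithLp.equiv 2 _ p).1 - (WithLp.equiv 2 _ p).2‖ ^ 2)
    (u v : ℝ → EuclideanSpace ℝ (Fin n))
    (hu : ∀ t, u t = (β / t) • x' t + x t)
    (hv : ∀ t, v t =
      (Real.sqrt ((β * γ + lam) / t ^ 2 - β * lam / t ^ 4) + β / t) • x' t + x t) :
    ∀ t ≥ t₁, 0 ≤ (β * γ + lam) / t ^ 2 - β * lam / t ^ 4 →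
      ‖gradient H ((WithLp.equiv 2
          (EuclideanSpace ℝ (Fin n) × EuclideanSpace ℝ (Fin n))).symm (u t, v t))‖ ≤
        (lam / t ^ 2) * ‖x'' t‖ +
        (L * β / t + γ / t +
          2 * Real.sqrt ((β * γ + lam) / t ^ 2 - β * lam / t ^ 4)) * ‖x' t‖ := by
  intro t ht hDpos
  have htpos : 0 < t := lt_of_lt_of_le ht₁ ht
  set s : ℝ := Real.sqrt ((β * γ + lam) / t ^ 2 - β * lam / t ^ 4) with hs
  have hs0 : 0 ≤ s := Real.sqrt_nonneg _
  have hgrad : gradient H ((WithLp.equiv 2 _).symm (u t, v t)) =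
      (WithLp.equiv 2 _).symm (gradient g (u t) + (u t - v t), v t - u t) :=
    (grad_key g hg H hH (u t) (v t)).gradient
  rw [hgrad]
  set c1 := gradient g (u t) + (u t - v t) with hc1
  set c2 := v t - u t with hc2
  -- norm of the pair is at most the sum of the component norms
  have hnorm : ‖(WithLp.equiv 2 _).symm (c1, c2)‖ ≤ ‖c1‖ + ‖c2‖ := by
    have h := WithLp.prod_norm_sq_eq_of_L2 ((WithLp.equiv 2 _).symm (c1, c2))
    have e1 : ((WithLp.equiv 2 _).symm (c1, c2)).fst = c1 := rfl
    have e2 : ((WithLp.equiv 2 _).symm (c1, c2)).snd = c2 := rfl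
    rw [e1, e2] at h
    nlinarith [norm_nonneg c1, norm_nonneg c2,
      norm_nonneg ((WithLp.equiv 2 _).symm (c1, c2)),
      mul_nonneg (norm_nonneg c1) (norm_nonneg c2)]
  -- component computations
  have hvu : v t - u t = s • x' t := by
    rw [hu, hv]
    rw [add_smul]
    abel
  have huv : u t - v t = -(s • x' t) := by
    rw [← hvu]; abel
  have hux : u t - x t = (β / t) • x' t := by
    rw [hu]; abel
  have hbt : 0 ≤ β / t := le_of_lt (div_pos hβ htpos)
  have h_ux_norm : ‖u t - x t‖ = (β / t) * ‖x' t‖ := by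
    rw [hux, norm_smul, Real.norm_eq_abs, abs_of_nonneg hbt]
  have h_lip : ‖gradient g (u t) - gradient g (x t)‖ ≤ L * ((β / t) * ‖x' t‖) := by
    have := hL (u t) (x t)
    rwa [h_ux_norm] at this
  have h_gx : ‖gradient g (x t)‖ ≤ (lam / t ^ 2) * ‖x'' t‖ + (γ / t) * ‖x' t‖ := by
    have h0 := hode t ht
    have : gradient g (x t) = -((lam / t ^ 2) • x'' t + (γ / t) • x' t) :=
      eq_neg_of_add_eq_zero_right h0
    rw [this, norm_neg]
    refine le_trans (norm_add_le _ _) ?_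
    rw [norm_smul, norm_smul, Real.norm_eq_abs, Real.norm_eq_abs,
      abs_of_nonneg (le_of_lt (div_pos hlam (pow_pos htpos 2))),
      abs_of_nonneg (le_of_lt (div_pos hγ htpos))]
  have h_uv_norm : ‖u t - v t‖ = s * ‖x' t‖ := by
    rw [huv, norm_neg, norm_smul, Real.norm_eq_abs, abs_of_nonneg hs0]
  have h_c2_norm : ‖c2‖ = s * ‖x' t‖ := by
    rw [hc2, hvu, norm_smul, Real.norm_eq_abs, abs_of_nonneg hs0]
  have h_c1 : ‖c1‖ ≤ L * ((β / t) * ‖x' t‖) +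
      ((lam / t ^ 2) * ‖x'' t‖ + (γ / t) * ‖x' t‖) + s * ‖x' t‖ := by
    have : c1 = (gradient g (u t) - gradient g (x t)) + gradient g (x t) + (u t - v t) := by
      rw [hc1]; abel
    rw [this]
    refine le_trans (norm_add₃_le) ?_
    rw [h_uv_norm]
    exact add_le_add (add_le_add h_lip h_gx) le_rfl
  have expand : (L * β / t + γ / t + 2 * s) * ‖x' t‖ =
      L * ((β / t) * ‖x' t‖) + (γ / t) * ‖x' t‖ + 2 * (s * ‖x' t‖) := by ring
  calc ‖(WithLp.equiv 2 _).symm (c1, c2)‖ ≤ ‖c1‖ + ‖c2‖ := hnorm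
    _ ≤ (lam / t ^ 2) * ‖x'' t‖ + (L * β / t + γ / t + 2 * s) * ‖x' t‖ := by
        rw [expand, h_c2_norm]; linarith
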